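/- Let k > 0, r₀ ∈ [k, a], and let ξ ∈ C¹([r₀, a]) with ξ(r₀) = 0 and ξ(a) = k·arccosh(a/k). Then ∫_{r₀}^{a} √(1 + ξ'(r)²) r dr ≥ a²/2 − r₀²/2 + (k²/2) ln a − C_k, where C_k depends only on k (not on r₀ or a). -/

import Mathlib

open MeasureTheory

/-- The inverse hyperbolic cosine, `arccosh x = log (x + √(x² − 1))` (for `x ≥ 1`). -/
noncomputable def arccosh (x : ℝ) : ℝ := Real.log (x + Real.sqrt (x ^ 2 - 1))

lemma aux_cs (k r p : ℝ) (hk : 0 < k) (hr : k ≤ r) :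
    Real.sqrt (r ^ 2 - k ^ 2) + k * p ≤ Real.sqrt (1 + p ^ 2) * r := by
  have hr0 : 0 < r := lt_of_lt_of_le hk hr
  have hs : Real.sqrt (r ^ 2 - k ^ 2) ^ 2 = r ^ 2 - k ^ 2 := by
    rw [Real.sq_sqrt]; nlinarith
  have ht : Real.sqrt (1 + p ^ 2) ^ 2 = 1 + p ^ 2 := by
    rw [Real.sq_sqrt]; nlinarith
  have hs0 : 0 ≤ Real.sqrt (r ^ 2 - k ^ 2) := Real.sqrt_nonneg _
  have ht0 : 0 ≤ Real.sqrt (1 + p ^ 2) := Real.sqrt_nonneg _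
  nlinarith [sq_nonneg (k - Real.sqrt (r ^ 2 - k ^ 2) * p),
    mul_nonneg ht0 hr0.le,
    sq_nonneg (Real.sqrt (1 + p ^ 2) * r - (Real.sqrt (r ^ 2 - k ^ 2) + k * p))]

lemma aux_lb (k r : ℝ) (hk : 0 < k) (hr : k ≤ r) :
    r - k ^ 2 / 2 * r⁻¹ - k ^ 4 / 2 / r ^ 3 ≤ Real.sqrt (r ^ 2 - k ^ 2) := by
  have hr0 : 0 < r := lt_of_lt_of_le hk hr
  set s := Real.sqrt (r ^ 2 - k ^ 2) with hsd
  have hs : s ^ 2 = r ^ 2 - k ^ 2 := by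
    rw [hsd, Real.sq_sqrt]; nlinarith
  have hs0 : 0 ≤ s := Real.sqrt_nonneg _
  have h2 : ((2 * r ^ 2 + k ^ 2) * s) ^ 2 ≤ (2 * r ^ 3) ^ 2 := by
    have h3 : ((2 * r ^ 2 + k ^ 2) * s) ^ 2 = (2 * r ^ 2 + k ^ 2) ^ 2 * (r ^ 2 - k ^ 2) := by
      rw [mul_pow, hs]
    rw [h3]; nlinarith [pow_pos hk 6, sq_nonneg (k * r), pow_pos hr0 2]
  have h1 : (2 * r ^ 2 + k ^ 2) * s ≤ 2 * r ^ 3 :=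
    (pow_le_pow_iff_left₀ (by positivity) (by positivity) two_ne_zero).mp h2
  have key : 2 * r ^ 4 - k ^ 2 * r ^ 2 - k ^ 4 ≤ 2 * r ^ 3 * s := by
    nlinarith [mul_le_mul_of_nonneg_left h1 hs0]
  have e : r - k ^ 2 / 2 * r⁻¹ - k ^ 4 / 2 / r ^ 3
      = (2 * r ^ 4 - k ^ 2 * r ^ 2 - k ^ 4) / (2 * r ^ 3) := by
    field_simp
  rw [e, div_le_iff₀ (by positivity)]
  linarith [key]

theorem stmt_2 (k : ℝ) (hk : 0 < k) :
    ∃ C : ℝ, ∀ r₀ a : ℝ, ∀ ξ : ℝ → ℝ,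
      k ≤ r₀ → r₀ ≤ a →
      ContDiffOn ℝ 1 ξ (Set.Icc r₀ a) →
      ξ r₀ = 0 → ξ a = k * arccosh (a / k) →
      a ^ 2 / 2 - r₀ ^ 2 / 2 + k ^ 2 / 2 * Real.log a - C ≤
        ∫ r in r₀..a, Real.sqrt (1 + (deriv ξ r) ^ 2) * r := by
  refine ⟨k ^ 2 / 2 * Real.log k + k ^ 2 / 4, ?_⟩
  intro r₀ a ξ hkr hra hξ h0 hEnd
  have ha0 : 0 < a := lt_of_lt_of_le hk (hkr.trans hra)
  rcases eq_or_lt_of_le hra with heq | hlt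
  · -- degenerate case r₀ = a, forces a = k
    subst heq
    have harc : arccosh (r₀ / k) = 0 := by
      have := hEnd.symm.trans h0
      rcases mul_eq_zero.mp this with h | h
      · exact absurd h hk.ne'
      · exact h
    have h1 : (1 : ℝ) ≤ r₀ / k := (one_le_div hk).mpr hkr
    have hs0 : 0 ≤ Real.sqrt ((r₀ / k) ^ 2 - 1) := Real.sqrt_nonneg _
    have harg : r₀ / k + Real.sqrt ((r₀ / k) ^ 2 - 1) = 1 := by
      unfold arccosh at harc
      rcases Real.log_eq_zero.mp harc with h | h | h
      · linarith
      · exact h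
      · linarith
    have hrk : r₀ = k := by
      have hle : r₀ / k ≤ 1 := by linarith
      have : r₀ ≤ k := (div_le_one hk).mp hle
      linarith
    rw [intervalIntegral.integral_same, hrk]
    nlinarith [sq_nonneg k]
  · -- main case r₀ < a
    set D := derivWithin ξ (Set.Icc r₀ a) with hDdef
    have hD : ContinuousOn D (Set.Icc r₀ a) :=
      hξ.continuousOn_derivWithin (uniqueDiffOn_Icc hlt) le_rfl
    have hmem : ∀ x ∈ Set.Ioo r₀ a, Set.Icc r₀ a ∈ nhds x := fun x hx =>
      Icc_mem_nhds hx.1 hx.2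
    have hderivξ : ∀ x ∈ Set.Ioo r₀ a, HasDerivAt ξ (D x) x := by
      intro x hx
      have hdw : DifferentiableWithinAt ℝ ξ (Set.Icc r₀ a) x :=
        (hξ.differentiableOn one_ne_zero) x (Set.Ioo_subset_Icc_self hx)
      exact hdw.hasDerivWithinAt.hasDerivAt (hmem x hx)
    have hEq : ∀ x ∈ Set.Ioo r₀ a, deriv ξ x = D x := fun x hx =>
      (derivWithin_of_mem_nhds (hmem x hx)).symm
    have huIcc : Set.uIcc r₀ a = Set.Icc r₀ a := Set.uIcc_of_le hra
    have hpos : ∀ x ∈ Set.Icc r₀ a, k ≤ x := fun x hx => hkr.trans hx.1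
    have hne : ∀ x ∈ Set.Icc r₀ a, x ≠ 0 := fun x hx =>
      (lt_of_lt_of_le hk (hpos x hx)).ne'
    -- integrabilities
    have hint_D : IntervalIntegrable D volume r₀ a :=
      ContinuousOn.intervalIntegrable (by rwa [huIcc])
    have hcont1 : ContinuousOn (fun r => Real.sqrt (1 + D r ^ 2) * r) (Set.Icc r₀ a) :=
      ((Real.continuous_sqrt.comp_continuousOn (continuousOn_const.add (hD.pow 2))).mul
        continuousOn_id)
    have hint1 : IntervalIntegrable (fun r => Real.sqrt (1 + D r ^ 2) * r) volume r₀ a :=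
      ContinuousOn.intervalIntegrable (by rwa [huIcc])
    have hcontg : ContinuousOn (fun r : ℝ => Real.sqrt (r ^ 2 - k ^ 2)) (Set.Icc r₀ a) :=
      (Real.continuous_sqrt.comp ((continuous_pow 2).sub continuous_const)).continuousOn
    have hintg : IntervalIntegrable (fun r : ℝ => Real.sqrt (r ^ 2 - k ^ 2)) volume r₀ a :=
      ContinuousOn.intervalIntegrable (by rwa [huIcc])
    have hcont2 : ContinuousOn (fun r : ℝ => Real.sqrt (r ^ 2 - k ^ 2) + k * D r)
        (Set.Icc r₀ a) := hcontg.add (continuousOn_const.mul hD)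
    have hint2 : IntervalIntegrable (fun r : ℝ => Real.sqrt (r ^ 2 - k ^ 2) + k * D r)
        volume r₀ a := ContinuousOn.intervalIntegrable (by rwa [huIcc])
    have hcont3 : ContinuousOn (fun x : ℝ => x - k ^ 2 / 2 * x⁻¹ - k ^ 4 / 2 / x ^ 3)
        (Set.Icc r₀ a) := by
      refine ((continuousOn_id.sub (continuousOn_const.mul
        (continuousOn_id.inv₀ hne))).sub
        (continuousOn_const.div ((continuous_pow 3).continuousOn) ?_))
      exact fun x hx => pow_ne_zero 3 (hne x hx)
    have hint3 : IntervalIntegrable (fun x : ℝ => x - k ^ 2 / 2 * x⁻¹ - k ^ 4 / 2 / x ^ 3)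
        volume r₀ a := ContinuousOn.intervalIntegrable (by rwa [huIcc])
    -- FTC for ξ
    have hFTC : ∫ x in r₀..a, D x = ξ a - ξ r₀ :=
      intervalIntegral.integral_eq_sub_of_hasDerivAt_of_le hra
        (hξ.continuousOn) hderivξ hint_D
    -- FTC for H
    have hHd : ∀ x ∈ Set.uIcc r₀ a,
        HasDerivAt (fun r : ℝ => r ^ 2 / 2 - k ^ 2 / 2 * Real.log r + k ^ 4 / 4 / r ^ 2)
          (x - k ^ 2 / 2 * x⁻¹ - k ^ 4 / 2 / x ^ 3) x := by
      intro x hx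
      rw [huIcc] at hx
      have hx0 : 0 < x := lt_of_lt_of_le hk (hpos x hx)
      have h1 : HasDerivAt (fun r : ℝ => r ^ 2 / 2) x x := by
        simpa using (hasDerivAt_pow 2 x).div_const 2
      have h2 : HasDerivAt (fun r : ℝ => k ^ 2 / 2 * Real.log r) (k ^ 2 / 2 * x⁻¹) x :=
        (Real.hasDerivAt_log hx0.ne').const_mul _
      have h3 : HasDerivAt (fun r : ℝ => k ^ 4 / 4 / r ^ 2) (-(k ^ 4 / 2 / x ^ 3)) x := by
        have hp : HasDerivAt (fun r : ℝ => r ^ 2) (2 * x) x := by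
          simpa using hasDerivAt_pow 2 x
        have h4 : HasDerivAt (fun r : ℝ => k ^ 4 / 4 * (r ^ 2)⁻¹)
            (k ^ 4 / 4 * (-(2 * x) / (x ^ 2) ^ 2)) x := (hp.inv (by positivity)).const_mul _
        simp only [div_eq_mul_inv] at h4 ⊢
        convert h4 using 1
        field_simp
        ring
      have htot := (h1.sub h2).add h3
      exact htot.congr_deriv (by ring)
    have hFTCH : ∫ x in r₀..a, (x - k ^ 2 / 2 * x⁻¹ - k ^ 4 / 2 / x ^ 3)
        = (a ^ 2 / 2 - k ^ 2 / 2 * Real.log a + k ^ 4 / 4 / a ^ 2)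
          - (r₀ ^ 2 / 2 - k ^ 2 / 2 * Real.log r₀ + k ^ 4 / 4 / r₀ ^ 2) :=
      intervalIntegral.integral_eq_sub_of_hasDerivAt hHd hint3
    -- a.e. congruence for the main integral
    have hcongr : ∫ r in r₀..a, Real.sqrt (1 + (deriv ξ r) ^ 2) * r
        = ∫ r in r₀..a, Real.sqrt (1 + D r ^ 2) * r := by
      apply intervalIntegral.integral_congr_ae
      have hane : ∀ᵐ x : ℝ, x ≠ a := by
        refine ae_iff.mpr ?_
        simpa using Real.volume_singleton (x := a)
      filter_upwards [hane] with x hx hxmem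
      rw [Set.uIoc_of_le hra] at hxmem
      have hxIoo : x ∈ Set.Ioo r₀ a := ⟨hxmem.1, lt_of_le_of_ne hxmem.2 hx⟩
      rw [hEq x hxIoo]
    -- monotonicity steps
    have hle1 : ∫ r in r₀..a, (Real.sqrt (r ^ 2 - k ^ 2) + k * D r)
        ≤ ∫ r in r₀..a, Real.sqrt (1 + D r ^ 2) * r :=
      intervalIntegral.integral_mono_on hra hint2 hint1
        (fun x hx => aux_cs k x (D x) hk (hpos x hx))
    have hsplit : ∫ r in r₀..a, (Real.sqrt (r ^ 2 - k ^ 2) + k * D r)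
        = (∫ r in r₀..a, Real.sqrt (r ^ 2 - k ^ 2)) + k * (ξ a - ξ r₀) := by
      rw [intervalIntegral.integral_add hintg (hint_D.const_mul k),
        intervalIntegral.integral_const_mul, hFTC]
    have hle2 : ∫ x in r₀..a, (x - k ^ 2 / 2 * x⁻¹ - k ^ 4 / 2 / x ^ 3)
        ≤ ∫ r in r₀..a, Real.sqrt (r ^ 2 - k ^ 2) :=
      intervalIntegral.integral_mono_on hra hint3 hintg
        (fun x hx => aux_lb k x hk (hpos x hx))
    -- arccosh lower bound
    have harc : Real.log a - Real.log k ≤ arccosh (a / k) := by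
      unfold arccosh
      have hdiv : (0 : ℝ) < a / k := by positivity
      have hle : a / k ≤ a / k + Real.sqrt ((a / k) ^ 2 - 1) :=
        le_add_of_nonneg_right (Real.sqrt_nonneg _)
      calc Real.log a - Real.log k = Real.log (a / k) :=
            (Real.log_div ha0.ne' hk.ne').symm
        _ ≤ _ := Real.log_le_log hdiv hle
    have harc2 : k ^ 2 * (Real.log a - Real.log k) ≤ k ^ 2 * arccosh (a / k) :=
      mul_le_mul_of_nonneg_left harc (by positivity)
    have hξa : k * (ξ a - ξ r₀) = k ^ 2 * arccosh (a / k) := by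
      rw [h0, hEnd]; ring
    have hlog2 : k ^ 2 / 2 * Real.log k ≤ k ^ 2 / 2 * Real.log r₀ :=
      mul_le_mul_of_nonneg_left (Real.log_le_log hk hkr) (by positivity)
    have hr₀0 : 0 < r₀ := lt_of_lt_of_le hk hkr
    have hbound : k ^ 4 / 4 / r₀ ^ 2 ≤ k ^ 2 / 4 := by
      rw [div_le_iff₀ (pow_pos hr₀0 2)]
      have hsq : k ^ 2 ≤ r₀ ^ 2 := by nlinarith
      nlinarith [mul_le_mul_of_nonneg_left hsq (by positivity : (0:ℝ) ≤ k ^ 2 / 4)]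
    have ha2 : (0 : ℝ) ≤ k ^ 4 / 4 / a ^ 2 := by positivity
    rw [hcongr]
    rw [hsplit, hξa] at hle1
    linarith [hle1, hle2, harc2]
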